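/- Let X be a finite partially ordered set, G its comparability graph, T a spanning tree of G, and suppose given for each tree edge x < y an invertible central element c₀ x y of R. Then there exists a coherent system c on X over R such that c x y = c₀ x y for every tree edge x < y. -/

import Mathlib

/-- The comparability graph of a partially ordered set: `x` and `y` are adjacent iff
they are distinct and comparable. -/
def compGraph (X : Type*) [PartialOrder X] : SimpleGraph X where
  Adj x y := x < y ∨ y < x
  symm := ⟨fun _ _ h => h.symm⟩
  loopless := ⟨fun x h => h.elim (lt_irrefl x) (lt_irrefl x)⟩

open SimpleGraph

section WalkWeight

variable {V : Type*} {G : SimpleGraph V} {M : Type*} [Group M]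

/-- Product of edge weights along a walk. -/
def walkWt (w : ∀ ⦃x y : V⦄, G.Adj x y → M) : ∀ {a b : V}, G.Walk a b → M
  | _, _, Walk.nil => 1
  | _, _, Walk.cons h p => w h * walkWt w p

lemma walkWt_append (w : ∀ ⦃x y : V⦄, G.Adj x y → M) {a b c : V}
    (p : G.Walk a b) (q : G.Walk b c) :
    walkWt w (p.append q) = walkWt w p * walkWt w q := by
  induction p with
  | nil => simp [walkWt]
  | cons h p ih => simp [walkWt, ih, mul_assoc]

lemma walkWt_concat (w : ∀ ⦃x y : V⦄, G.Adj x y → M) {a b c : V}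
    (p : G.Walk a b) (h : G.Adj b c) :
    walkWt w (p.concat h) = walkWt w p * w h := by
  rw [Walk.concat_eq_append, walkWt_append]
  simp [walkWt]

lemma isPath_concat {a b c : V} {p : G.Walk a b} (hp : p.IsPath) (h : G.Adj b c)
    (hc : c ∉ p.support) : (p.concat h).IsPath := by
  rw [Walk.isPath_def, Walk.support_concat]
  rw [← List.concat_eq_append]
  exact List.Nodup.concat hc (Walk.isPath_def _ |>.mp hp)

lemma walkWt_path_edge (w : ∀ ⦃x y : V⦄, G.Adj x y → M)
    (hw : ∀ ⦃x y : V⦄ (h : G.Adj x y), w h.symm = (w h)⁻¹)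
    (hG : G.IsAcyclic) {r x y : V} {p : G.Walk r x} {q : G.Walk r y}
    (hp : p.IsPath) (hq : q.IsPath) (h : G.Adj x y) :
    walkWt w q = walkWt w p * w h := by
  classical
  by_cases hy : y ∈ p.support
  · have hq' : (p.takeUntil y hy).IsPath := hp.takeUntil hy
    have hxq : x ∉ (p.takeUntil y hy).support := by
      intro hx
      have hnd : p.support.Nodup := hp.support_nodup
      have hxd : x ∈ (p.dropUntil y hy).support := Walk.end_mem_support _
      have hxdt : x ∈ (p.dropUntil y hy).support.tail := by
        have hcons := Walk.support_eq_cons (p.dropUntil y hy)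
        rcases List.mem_cons.mp (hcons ▸ hxd) with h1 | h1
        · exact absurd h1 h.ne
        · exact h1
      rw [← Walk.take_spec p hy, Walk.support_append] at hnd
      exact (List.disjoint_of_nodup_append hnd) hx hxdt
    have hqq : q = p.takeUntil y hy :=
      congrArg Subtype.val (hG.path_unique ⟨q, hq⟩ ⟨_, hq'⟩)
    have hpp : p = (p.takeUntil y hy).concat h.symm :=
      congrArg Subtype.val (hG.path_unique ⟨p, hp⟩ ⟨_, isPath_concat hq' h.symm hxq⟩)
    rw [hqq, congrArg (walkWt w) hpp, walkWt_concat, hw h, mul_assoc, inv_mul_cancel, mul_one]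
  · have hpath : (p.concat h).IsPath := isPath_concat hp h hy
    have hqq : q = p.concat h :=
      congrArg Subtype.val (hG.path_unique ⟨q, hq⟩ ⟨_, hpath⟩)
    rw [hqq, walkWt_concat]

end WalkWeight

section CenterUnit

variable {R : Type*} [Ring R]

/-- Package a central unit of `R` as a unit of the center subring. -/
noncomputable def centerUnit (a : R) (hc : a ∈ Set.center R) (hu : IsUnit a) :
    (Subring.center R)ˣ where
  val := ⟨a, hc⟩
  inv := ⟨↑hu.unit⁻¹, by
    rw [Subring.mem_center_iff]
    intro g
    have hc' : ∀ b : R, b * a = a * b := Semigroup.mem_center_iff.mp hc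
    have ha : (↑hu.unit⁻¹ : R) * a = 1 := by
      exact hu.val_inv_mul
    have ha' : a * (↑hu.unit⁻¹ : R) = 1 := hu.mul_val_inv
    have key : (↑hu.unit⁻¹ : R) * (a * g) * ↑hu.unit⁻¹ = g * ↑hu.unit⁻¹ := by
      rw [← mul_assoc, ha, one_mul]
    have key2 : (↑hu.unit⁻¹ : R) * (g * a) * ↑hu.unit⁻¹ = ↑hu.unit⁻¹ * g := by
      rw [mul_assoc, mul_assoc g a, ha', mul_one]
    rw [← key, ← hc' g, key2]⟩
  val_inv := Subtype.ext (by
    show a * ↑hu.unit⁻¹ = 1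
    exact hu.mul_val_inv)
  inv_val := Subtype.ext (by
    show (↑hu.unit⁻¹ : R) * a = 1
    exact hu.val_inv_mul)

@[simp] lemma centerUnit_coe (a : R) (hc : a ∈ Set.center R) (hu : IsUnit a) :
    ((centerUnit a hc hu : Subring.center R) : R) = a := rfl

end CenterUnit

section Main

variable {X R : Type*} [PartialOrder X] [Ring R] {T : SimpleGraph X}

open Classical in
/-- The weight of a tree edge, oriented by the order. -/
noncomputable def treeWeight (hT : T ≤ compGraph X) (c₀ : X → X → R)
    (hc₀ : ∀ x y : X, x < y → T.Adj x y → c₀ x y ∈ Set.center R ∧ IsUnit (c₀ x y))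
    ⦃x y : X⦄ (h : T.Adj x y) : (Subring.center R)ˣ :=
  if hlt : x < y then centerUnit (c₀ x y) (hc₀ x y hlt h).1 (hc₀ x y hlt h).2
  else (centerUnit (c₀ y x) (hc₀ y x (Or.resolve_left (hT h) hlt) h.symm).1
        (hc₀ y x (Or.resolve_left (hT h) hlt) h.symm).2)⁻¹

open Classical in
lemma treeWeight_symm (hT : T ≤ compGraph X) (c₀ : X → X → R)
    (hc₀ : ∀ x y : X, x < y → T.Adj x y → c₀ x y ∈ Set.center R ∧ IsUnit (c₀ x y))
    ⦃x y : X⦄ (h : T.Adj x y) :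
    treeWeight hT c₀ hc₀ h.symm = (treeWeight hT c₀ hc₀ h)⁻¹ := by
  have hor : x < y ∨ y < x := hT h
  unfold treeWeight
  rcases hor with hlt | hlt
  · rw [dif_neg (asymm hlt), dif_pos hlt]
  · rw [dif_pos hlt, dif_neg (asymm hlt), inv_inv]

open Classical in
lemma treeWeight_lt (hT : T ≤ compGraph X) (c₀ : X → X → R)
    (hc₀ : ∀ x y : X, x < y → T.Adj x y → c₀ x y ∈ Set.center R ∧ IsUnit (c₀ x y))
    ⦃x y : X⦄ (hlt : x < y) (h : T.Adj x y) :
    ((treeWeight hT c₀ hc₀ h : Subring.center R) : R) = c₀ x y := by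
  unfold treeWeight
  rw [dif_pos hlt]
  rfl

end Main


/-- Given a spanning tree `T` of the comparability graph of a finite poset
`X` and invertible central elements `c₀ x y` for the tree edges `x < y`, there is a
coherent system on `X` extending the assignment `c₀` (Lemma 3.5). -/
theorem coherent_system_extending_tree_data {X R : Type*} [PartialOrder X] [Fintype X]
    [Ring R]
    (T : SimpleGraph X) (hT : T ≤ compGraph X) (hTconn : T.Connected)
    (hTacyc : T.IsAcyclic)
    (c₀ : X → X → R)
    (hc₀ : ∀ x y : X, x < y → T.Adj x y → c₀ x y ∈ Set.center R ∧ IsUnit (c₀ x y)) :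
    ∃ c : X → X → R,
      (∀ x y : X, x < y → c x y ∈ Set.center R ∧ IsUnit (c x y)) ∧
      (∀ x z y : X, x < z → z < y → c x y = c x z * c z y) ∧
      (∀ x y : X, x < y → T.Adj x y → c x y = c₀ x y) := by
  classical
  have hne : Nonempty X := hTconn.nonempty
  obtain ⟨r⟩ := hne
  have hTree : T.IsTree := ⟨hTconn, hTacyc⟩
  choose P hP _ using fun x => hTree.existsUnique_path r x
  set W := treeWeight hT c₀ hc₀ with hW
  refine ⟨fun x y =>
    ((((walkWt W (P x))⁻¹ * walkWt W (P y) : (Subring.center R)ˣ) :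
      Subring.center R) : R), ?_, ?_, ?_⟩
  · intro x y _
    constructor
    · rw [Semigroup.mem_center_iff]
      intro g
      exact Subring.mem_center_iff.mp (SetLike.coe_mem _) g
    · exact IsUnit.map (Subring.center R).subtype
        ((walkWt W (P x))⁻¹ * walkWt W (P y) : (Subring.center R)ˣ).isUnit
  · intro x z y _ _
    dsimp only
    have hgrp : ((walkWt W (P x))⁻¹ * walkWt W (P y) : (Subring.center R)ˣ)
        = ((walkWt W (P x))⁻¹ * walkWt W (P z)) * ((walkWt W (P z))⁻¹ * walkWt W (P y)) := by
      group
    rw [hgrp, Units.val_mul]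
    push_cast
    ring
  · intro x y hlt hadj
    dsimp only
    have key : walkWt W (P y) = walkWt W (P x) * W hadj :=
      walkWt_path_edge W (treeWeight_symm hT c₀ hc₀) hTacyc (hP x) (hP y) hadj
    have hval : ((walkWt W (P x))⁻¹ * walkWt W (P y) : (Subring.center R)ˣ) = W hadj := by
      rw [key, inv_mul_cancel_left]
    rw [hval, hW]
    exact treeWeight_lt hT c₀ hc₀ hlt hadj
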